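/- Let X be a compact topological space, V a finite-dimensional real normed space, d ∈ ℕ, and let f : X × V → ℝ be continuous such that f(x, F) = Σ_{i=0}^d a_i(x, F) where each a_i(x, ·) is a positively i-homogeneous continuous function of F. Then each component a_i : X × V → ℝ is jointly continuous. -/

import Mathlib

private lemma stmt10_aux (X V : Type*) [TopologicalSpace X]
    [NormedAddCommGroup V] [NormedSpace ℝ V] :
    ∀ (d : ℕ) (f : X → V → ℝ), Continuous (fun p : X × V => f p.1 p.2) →
    ∀ (a : ℕ → X → V → ℝ),
      (∀ x F, f x F = ∑ i ∈ Finset.range (d + 1), a i x F) →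
      (∀ i ≤ d, ∀ x F, a i x ((2:ℝ) • F) = 2 ^ i * a i x F) →
      (∀ i ≤ d, ∀ x, Continuous (a i x)) →
      ∀ i ≤ d, Continuous fun p : X × V => a i p.1 p.2 := by
  intro d
  induction d with
  | zero =>
    intro f hf a hdec _ _ i hi
    interval_cases i
    have : (fun p : X × V => a 0 p.1 p.2) = fun p => f p.1 p.2 := by
      funext p; rw [hdec]; simp
    rw [this]; exact hf
  | succ d ih =>
    intro f hf a hdec hhom hcont i hi
    set g : X → V → ℝ := fun x F => 2 ^ (d + 1) * f x F - f x ((2:ℝ) • F) with hg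
    set b : ℕ → X → V → ℝ := fun i x F => ((2:ℝ) ^ (d + 1) - 2 ^ i) * a i x F with hb
    have hgcont : Continuous (fun p : X × V => g p.1 p.2) := by
      apply Continuous.sub
      · exact continuous_const.mul hf
      · exact hf.comp (continuous_fst.prodMk (continuous_const_smul _ |>.comp continuous_snd))
    have hgdec : ∀ x F, g x F = ∑ j ∈ Finset.range (d + 1), b j x F := by
      intro x F
      have key : g x F
          = ∑ j ∈ Finset.range (d + 2), (2 ^ (d + 1) * a j x F - 2 ^ j * a j x F) := by
        simp only [hg, hdec, Finset.mul_sum, ← Finset.sum_sub_distrib]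
        refine Finset.sum_congr rfl fun j hj => ?_
        rw [hhom j (Nat.lt_succ_iff.mp (Finset.mem_range.mp hj)) x F]
      rw [key, Finset.sum_range_succ]
      simp [hb, sub_mul]
    have hbhom : ∀ j ≤ d, ∀ x F, b j x ((2:ℝ) • F) = 2 ^ j * b j x F := by
      intro j hj x F
      simp only [hb, hhom j (hj.trans (Nat.le_succ d)) x F]; ring
    have hbcont : ∀ j ≤ d, ∀ x, Continuous (b j x) := by
      intro j hj x
      exact continuous_const.mul (hcont j (hj.trans (Nat.le_succ d)) x)
    have hbjoint := ih g hgcont b hgdec hbhom hbcont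
    have hajoint : ∀ j ≤ d, Continuous fun p : X × V => a j p.1 p.2 := by
      intro j hj
      have hc : ((2:ℝ) ^ (d + 1) - 2 ^ j) ≠ 0 := by
        have : (2:ℝ) ^ j < 2 ^ (d + 1) :=
          pow_lt_pow_right₀ (by norm_num) (Nat.lt_succ_of_le hj)
        linarith
      have : (fun p : X × V => a j p.1 p.2)
          = fun p => ((2:ℝ) ^ (d + 1) - 2 ^ j)⁻¹ * b j p.1 p.2 := by
        funext p; field_simp [hb]; simp only [hb]; ring
      rw [this]
      exact continuous_const.mul (hbjoint j hj)
    rcases Nat.lt_succ_iff_lt_or_eq.mp (Nat.lt_succ_of_le hi) with h | h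
    · exact hajoint i (Nat.lt_succ_iff.mp h)
    · subst h
      have : (fun p : X × V => a (d + 1) p.1 p.2)
          = fun p => f p.1 p.2 - ∑ j ∈ Finset.range (d + 1), a j p.1 p.2 := by
        funext p; rw [hdec]; rw [Finset.sum_range_succ]; ring
      rw [this]
      apply hf.sub
      exact continuous_finset_sum _ fun j hj =>
        hajoint j (Nat.lt_succ_iff.mp (Finset.mem_range.mp hj))

/-- If a continuous `f : X × V → ℝ` (with `X` compact) decomposes into
positively `i`-homogeneous components `a_i`, each continuous in `F`, then every
component `a_i` is jointly continuous. -/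
theorem stmt10 (X V : Type*) [TopologicalSpace X] [CompactSpace X]
    [NormedAddCommGroup V] [NormedSpace ℝ V] [FiniteDimensional ℝ V]
    (d : ℕ) (f : X → V → ℝ)
    (hf : Continuous fun p : X × V => f p.1 p.2)
    (a : ℕ → X → V → ℝ)
    (hdec : ∀ x F, f x F = ∑ i ∈ Finset.range (d + 1), a i x F)
    (hhom : ∀ i ≤ d, ∀ x, ∀ t : ℝ, 0 ≤ t → ∀ F, a i x (t • F) = t ^ i * a i x F)
    (hcont : ∀ i ≤ d, ∀ x, Continuous (a i x)) :
    ∀ i ≤ d, Continuous fun p : X × V => a i p.1 p.2 := by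
  exact stmt10_aux X V d f hf a hdec
    (fun i hi x F => hhom i hi x 2 (by norm_num) F) hcont
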